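/- For $q = 2$ and integers $2 \le s \le k$, there exists an affine $s$-blocking set in $\mathbb{F}_2^k$ of size at most $\frac{s(k-s)+s+2}{\log_2(2^s/(2^s-1))} + 1$. -/

import Mathlib

open Module

lemma ABQ2.prod_lb (n : ℕ) :
    (1:ℝ)/4 + (1/2)^(n+1) ≤ ∏ j ∈ Finset.range n, (1 - (1/2:ℝ)^(j+1)) := by
  induction n with
  | zero => norm_num
  | succ n ih =>
    rcases Nat.eq_zero_or_pos n with rfl | hn
    · norm_num
    · rw [Finset.prod_range_succ]
      have hx : ((1:ℝ)/2)^(n+1) ≤ 1/4 := by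
        calc ((1:ℝ)/2)^(n+1) ≤ (1/2)^2 := by
              apply pow_le_pow_of_le_one (by norm_num) (by norm_num); omega
          _ = 1/4 := by norm_num
      have hpos : (0:ℝ) < 1 - (1/2)^(n+1) := by nlinarith
      calc (1:ℝ)/4 + (1/2)^(n+1+1)
          ≤ ((1:ℝ)/4 + (1/2)^(n+1)) * (1 - (1/2)^(n+1)) := by
            have : ((1:ℝ)/2)^(n+1+1) = (1/2) * (1/2)^(n+1) := by ring
            nlinarith [pow_nonneg (by norm_num : (0:ℝ) ≤ 1/2) (n+1)]
        _ ≤ _ := by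
            apply mul_le_mul_of_nonneg_right ih hpos.le

lemma ABQ2.bases_lb (d : ℕ) :
    (2:ℝ)^(d*d) * ((1:ℝ)/4 + (1/2)^(d+1)) ≤ ((∏ i : Fin d, (2^d - 2^(i:ℕ)) : ℕ) : ℝ) := by
  have hcast : ((∏ i : Fin d, (2^d - 2^(i:ℕ)) : ℕ) : ℝ)
      = ∏ i ∈ Finset.range d, ((2:ℝ)^d - 2^i) := by
    rw [Fin.prod_univ_eq_prod_range (fun i => 2^d - 2^i : ℕ → ℕ), Nat.cast_prod]
    refine Finset.prod_congr rfl fun i hi => ?_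
    rw [Nat.cast_sub (Nat.pow_le_pow_right (by norm_num) (Finset.mem_range.1 hi).le)]
    push_cast; ring
  have hfact : ∀ i ∈ Finset.range d, ((2:ℝ)^d - 2^i) = 2^d * (1 - (1/2:ℝ)^(d - i)) := by
    intro i hi
    have hid : i ≤ d := (Finset.mem_range.1 hi).le
    have : ((1:ℝ)/2)^(d-i) = 2^i / 2^d := by
      rw [div_pow, one_pow, div_eq_div_iff (by positivity) (by positivity), one_mul,
        ← pow_add, Nat.add_sub_cancel' hid]
    rw [this]; field_simp
  rw [hcast, Finset.prod_congr rfl hfact, Finset.prod_mul_distrib, Finset.prod_const,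
    Finset.card_range, ← pow_mul]
  have hrefl : ∏ i ∈ Finset.range d, (1 - (1/2:ℝ)^(d - i))
      = ∏ j ∈ Finset.range d, (1 - (1/2:ℝ)^(j+1)) := by
    rw [← Finset.prod_range_reflect (fun j => 1 - (1/2:ℝ)^(j+1)) d]
    refine Finset.prod_congr rfl fun i hi => ?_
    have : d - 1 - i + 1 = d - i := by
      have := Finset.mem_range.1 hi; omega
    rw [this]
  rw [hrefl]
  exact mul_le_mul_of_nonneg_left (ABQ2.prod_lb d) (by positivity)

lemma ABQ2.card_count (k d : ℕ) :
    Nat.card {W : Submodule (ZMod 2) (Fin k → ZMod 2) // Module.finrank (ZMod 2) W = d}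
      * (∏ i : Fin d, (2^d - 2^(i:ℕ))) ≤ (2^k)^d := by
  classical
  set V := (Fin k → ZMod 2) with hV
  haveI : Finite (Submodule (ZMod 2) V) :=
    Finite.of_injective (fun W => (W : Set V)) SetLike.coe_injective
  set 𝒲 := {W : Submodule (ZMod 2) V // Module.finrank (ZMod 2) W = d} with h𝒲
  haveI : Fintype 𝒲 := Fintype.ofFinite _
  haveI : ∀ W : 𝒲, Fintype {s : Fin d → W.1 // LinearIndependent (ZMod 2) s} :=
    fun W => Fintype.ofFinite _
  have hfib : ∀ W : 𝒲, Fintype.card {s : Fin d → W.1 // LinearIndependent (ZMod 2) s}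
      = ∏ i : Fin d, (2^d - 2^(i:ℕ)) := by
    intro W
    have h1 : Module.finrank (ZMod 2) W.1 = d := W.2
    have := card_linearIndependent (K := ZMod 2) (V := W.1) (k := d) (by rw [h1])
    rw [Nat.card_eq_fintype_card] at this
    rw [this]
    simp [ZMod.card, h1]
  have hspan : ∀ (U : Submodule (ZMod 2) V), Module.finrank (ZMod 2) U = d →
      ∀ (t : Fin d → U), LinearIndependent (ZMod 2) t →
      Submodule.span (ZMod 2) (Set.range (fun i => (t i : V))) = U := by
    intro U hU t ht
    have htop : Submodule.span (ZMod 2) (Set.range t) = ⊤ :=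
      Submodule.eq_top_of_finrank_eq (by rw [finrank_span_eq_card ht, Fintype.card_fin, hU])
    have hrange : Set.range (fun i => (t i : V)) = U.subtype '' Set.range t := by
      ext v; simp [Set.range_comp]
    rw [hrange, ← Submodule.map_span, htop, Submodule.map_top, Submodule.range_subtype]
  have hinj : Function.Injective
      (fun p : (Σ W : 𝒲, {s : Fin d → W.1 // LinearIndependent (ZMod 2) s}) =>
        (fun i => ((p.2.1 i : V)) : Fin d → V)) := by
    rintro ⟨⟨W, hW⟩, s, hs⟩ ⟨⟨W', hW'⟩, s', hs'⟩ h
    simp only at h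
    have hWW' : W = W' := by
      rw [← hspan W hW s hs, ← hspan W' hW' s' hs', h]
    subst hWW'
    have hss' : s = s' := by
      funext i
      exact Subtype.ext (congrFun h i)
    subst hss'
    rfl
  have hle := Fintype.card_le_of_injective _ hinj
  rw [Fintype.card_sigma] at hle
  simp only [hfib, Finset.sum_const, Finset.card_univ, smul_eq_mul] at hle
  have hcard : Fintype.card (Fin d → V) = (2^k)^d := by
    rw [Fintype.card_fun]
    simp [hV, ZMod.card]
  rw [hcard] at hle
  rwa [Nat.card_eq_fintype_card]

lemma ABQ2.card_mk_fiber (k : ℕ) (W : Submodule (ZMod 2) (Fin k → ZMod 2))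
    (c : (Fin k → ZMod 2) ⧸ W) :
    Nat.card {v : Fin k → ZMod 2 // Submodule.Quotient.mk v = c} = Nat.card W := by
  obtain ⟨v₀, rfl⟩ := Submodule.Quotient.mk_surjective W c
  have e : W ≃ {v : Fin k → ZMod 2 // Submodule.Quotient.mk v = Submodule.Quotient.mk v₀} := {
    toFun := fun w => ⟨v₀ + w.1, (Submodule.Quotient.eq W).mpr (by simpa using w.2)⟩
    invFun := fun v => ⟨v.1 - v₀, by
      have := (Submodule.Quotient.eq W).mp v.2
      exact this⟩
    left_inv := fun w => by ext; simp
    right_inv := fun v => by ext; simp }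
  exact (Nat.card_congr e).symm

lemma ABQ2.card_quot (k s : ℕ) (hsk : s ≤ k) (W : Submodule (ZMod 2) (Fin k → ZMod 2))
    (hW : Module.finrank (ZMod 2) W = k - s) :
    Nat.card ((Fin k → ZMod 2) ⧸ W) = 2^s ∧ Nat.card W = 2^(k-s) := by
  haveI : Fintype ((Fin k → ZMod 2) ⧸ W) := Fintype.ofFinite _
  haveI : Fintype W := Fintype.ofFinite _
  have hfr : Module.finrank (ZMod 2) ((Fin k → ZMod 2) ⧸ W) = s := by
    have h := Submodule.finrank_quotient_add_finrank W
    rw [hW, Module.finrank_fin_fun] at h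
    omega
  constructor
  · rw [Nat.card_eq_fintype_card, card_eq_pow_finrank (K := ZMod 2), hfr, ZMod.card]
  · rw [Nat.card_eq_fintype_card, card_eq_pow_finrank (K := ZMod 2), hW, ZMod.card]

lemma ABQ2.exists_good (k s m : ℕ) (hsk : s ≤ k)
    (hlt : Nat.card {W : Submodule (ZMod 2) (Fin k → ZMod 2) //
          Module.finrank (ZMod 2) W = k - s} * 2^s * (2^k - 2^(k-s))^m < (2^k)^m) :
    ∃ f : Fin m → (Fin k → ZMod 2),
      ∀ W : Submodule (ZMod 2) (Fin k → ZMod 2), Module.finrank (ZMod 2) W = k - s →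
        ∀ c : (Fin k → ZMod 2) ⧸ W, ∃ i, Submodule.Quotient.mk (f i) = c := by
  classical
  by_contra hcon
  push_neg at hcon
  set V := (Fin k → ZMod 2) with hV
  haveI : Finite (Submodule (ZMod 2) V) :=
    Finite.of_injective (fun W => (W : Set V)) SetLike.coe_injective
  set 𝒲 := {W : Submodule (ZMod 2) V // Module.finrank (ZMod 2) W = k - s} with h𝒲
  haveI : Fintype 𝒲 := Fintype.ofFinite _
  haveI : ∀ W : 𝒲, Fintype (V ⧸ W.1) := fun W => Fintype.ofFinite _
  let Bad : (Σ W : 𝒲, V ⧸ W.1) → Finset (Fin m → V) :=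
    fun p => Finset.univ.filter (fun f => ∀ i, Submodule.Quotient.mk (f i) ≠ p.2)
  have hsub : (Finset.univ : Finset (Fin m → V)) ⊆ Finset.univ.biUnion Bad := by
    intro f _
    obtain ⟨W, hW, c, hc⟩ := hcon f
    exact Finset.mem_biUnion.mpr ⟨⟨⟨W, hW⟩, c⟩, Finset.mem_univ _,
      Finset.mem_filter.mpr ⟨Finset.mem_univ _, hc⟩⟩
  have hcards := (Finset.card_le_card hsub).trans (Finset.card_biUnion_le)
  have hbad : ∀ p : (Σ W : 𝒲, V ⧸ W.1), (Bad p).card = (2^k - 2^(k-s))^m := by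
    rintro ⟨W, c⟩
    have h1 : (Bad ⟨W, c⟩).card
        = Fintype.card {f : Fin m → V // ∀ i, Submodule.Quotient.mk (f i) ≠ c} :=
      (Fintype.card_subtype _).symm
    rw [h1, Fintype.card_congr (Equiv.subtypePiEquivPi
      (p := fun (_ : Fin m) (v : V) => Submodule.Quotient.mk v ≠ c)), Fintype.card_pi]
    have h2 : Fintype.card {v : V // Submodule.Quotient.mk v ≠ c} = 2^k - 2^(k-s) := by
      rw [Fintype.card_subtype_compl]
      have h3 : Fintype.card {v : V // Submodule.Quotient.mk v = c} = 2^(k-s) := by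
        rw [← Nat.card_eq_fintype_card, ABQ2.card_mk_fiber k W.1 c,
          (ABQ2.card_quot k s hsk W.1 W.2).2]
      rw [h3]
      congr 1
      simp [hV, Fintype.card_fun, ZMod.card]
    simp [h2]
  have htot : ∑ p : (Σ W : 𝒲, V ⧸ W.1), (Bad p).card
      = Nat.card 𝒲 * 2^s * (2^k - 2^(k-s))^m := by
    rw [Finset.sum_congr rfl (fun p _ => hbad p), Finset.sum_const, Finset.card_univ,
      Fintype.card_sigma]
    have : ∀ W : 𝒲, Fintype.card (V ⧸ W.1) = 2^s := by
      intro W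
      rw [← Nat.card_eq_fintype_card, (ABQ2.card_quot k s hsk W.1 W.2).1]
    simp only [this, Finset.sum_const, Finset.card_univ, smul_eq_mul,
      Nat.card_eq_fintype_card]
  rw [htot] at hcards
  have huniv : (Finset.univ : Finset (Fin m → V)).card = (2^k)^m := by
    rw [Finset.card_univ, Fintype.card_fun]
    simp [hV, ZMod.card]
  rw [huniv] at hcards
  exact absurd hcards (not_le.mpr hlt)

/-- For `2 ≤ s ≤ k`, there exists an affine `s`-blocking set in `𝔽_2^k` (a set of points
meeting every `(k-s)`-dimensional affine subspace) of size at most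
`(s(k-s)+s+2)/log₂(2^s/(2^s-1)) + 1`. -/
theorem affine_blocking_upper_q2 (k s : ℕ) (hs : 2 ≤ s) (hsk : s ≤ k) :
    ∃ B : Finset (Fin k → ZMod 2),
      (∀ W : Submodule (ZMod 2) (Fin k → ZMod 2), Module.finrank (ZMod 2) W = k - s →
        ∀ x : Fin k → ZMod 2, ∃ b ∈ B, b - x ∈ W) ∧
      (B.card : ℝ) ≤ (s * (k - s) + s + 2) /
          Real.logb 2 ((2 : ℝ) ^ s / ((2 : ℝ) ^ s - 1)) + 1 := by
  classical
  set d := k - s with hd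
  set N := d * s + s + 2 with hN
  -- the log base quantity
  have h2s1 : (0:ℝ) < (2:ℝ)^s - 1 := by
    have : (2:ℝ) ≤ 2^s := by
      calc (2:ℝ) = 2^1 := (pow_one 2).symm
        _ ≤ 2^s := by apply pow_le_pow_right₀ (by norm_num); omega
    linarith
  have hr1 : (1:ℝ) < (2:ℝ)^s / ((2:ℝ)^s - 1) := by
    rw [lt_div_iff₀ h2s1]; linarith
  set r : ℝ := (2:ℝ)^s / ((2:ℝ)^s - 1) with hrdef
  set den : ℝ := Real.logb 2 r with hden
  have hdenpos : 0 < den := Real.logb_pos (by norm_num) hr1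
  set m := ⌈(N : ℝ) / den⌉₊ with hm
  -- m * den ≥ N
  have hmden : (N : ℝ) ≤ m * den := by
    have h1 : (N : ℝ) / den ≤ m := Nat.le_ceil _
    calc (N:ℝ) = (N/den) * den := by field_simp
      _ ≤ m * den := by apply mul_le_mul_of_nonneg_right h1 hdenpos.le
  -- key power inequality : (1 - 2^{-s})^m * 2^N ≤ 1
  have hu : ((2:ℝ)^s - 1) / 2^s = r⁻¹ := by
    rw [hrdef, inv_div]
  have hupos : (0:ℝ) < ((2:ℝ)^s - 1) / 2^s := by positivity
  have hkey : (((2:ℝ)^s - 1) / 2^s)^m * 2^N ≤ 1 := by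
    rw [hu]
    have h2N : ((2:ℝ))^N ≤ r^m := by
      have hrpos : (0:ℝ) < r := by positivity
      have e1 : (2:ℝ) ^ (den * (m:ℝ)) = r^m := by
        rw [Real.rpow_mul (by norm_num : (0:ℝ) ≤ 2), hden,
          Real.rpow_logb (by norm_num) (by norm_num) hrpos, Real.rpow_natCast]
      rw [← e1, ← Real.rpow_natCast 2 N]
      apply Real.rpow_le_rpow_left_iff (by norm_num : (1:ℝ) < 2) |>.mpr
      rw [mul_comm den _]
      exact hmden
    calc (r⁻¹)^m * 2^N ≤ (r⁻¹)^m * r^m := by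
          apply mul_le_mul_of_nonneg_left h2N (by positivity)
      _ = 1 := by
          rw [← mul_pow, inv_mul_cancel₀ (by positivity), one_pow]
  -- counting : card of subspaces
  set C := Nat.card {W : Submodule (ZMod 2) (Fin k → ZMod 2) //
    Module.finrank (ZMod 2) W = d} with hC
  have hCbound : (C : ℝ) < 2^(d*s+2) := by
    have h1 := ABQ2.card_count k d
    have h2 := ABQ2.bases_lb d
    have hL : (0:ℝ) < 2^(d*d) * ((1:ℝ)/4 + (1/2)^(d+1)) := by positivity
    have h3 : (C:ℝ) * (2^(d*d) * ((1:ℝ)/4 + (1/2)^(d+1))) ≤ ((2^k)^d : ℕ) := by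
      calc (C:ℝ) * (2^(d*d) * ((1:ℝ)/4 + (1/2)^(d+1)))
          ≤ (C:ℝ) * ((∏ i : Fin d, (2^d - 2^(i:ℕ)) : ℕ) : ℝ) := by
            apply mul_le_mul_of_nonneg_left h2 (by positivity)
        _ = ((C * ∏ i : Fin d, (2^d - 2^(i:ℕ)) : ℕ) : ℝ) := by push_cast; ring
        _ ≤ _ := by exact_mod_cast h1
    have hkd : ((2^k)^d : ℕ) = ((2:ℝ))^(k*d) := by
      push_cast; rw [← pow_mul]
    rw [hkd] at h3
    -- C ≤ 2^(kd) / (2^(d²)(1/4+..)) < 2^(kd) / 2^(d²-2) = 2^(ds+2)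
    have h4 : (C:ℝ) * (2^(d*d) * ((1:ℝ)/4)) < 2^(k*d) := by
      rcases Nat.eq_zero_or_pos C with h | h
      · rw [h]; simp only [Nat.cast_zero, zero_mul]; positivity
      · have hCpos : (0:ℝ) < C := by exact_mod_cast h
        calc (C:ℝ) * (2^(d*d) * ((1:ℝ)/4)) < (C:ℝ) * (2^(d*d) * ((1:ℝ)/4 + (1/2)^(d+1))) := by
              apply mul_lt_mul_of_pos_left _ hCpos
              apply mul_lt_mul_of_pos_left _ (by positivity)
              have : (0:ℝ) < (1/2)^(d+1) := by positivity
              linarith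
          _ ≤ 2^(k*d) := h3
    have hkds : k * d = d*d + d*s := by
      have h : d + s = k := by omega
      calc k * d = (d + s) * d := by rw [h]
        _ = d*d + d*s := by ring
    rw [hkds, pow_add] at h4
    have h5 : (0:ℝ) < 2^(d*d) := by positivity
    rw [pow_add]
    nlinarith [h4, h5]
  -- the strict counting inequality in ℕ
  have hXpos : 0 < 2^k - 2^(k-s) := by
    have : 2^(k-s) < 2^k := Nat.pow_lt_pow_right (by norm_num) (by omega)
    omega
  have hlt : C * 2^s * (2^k - 2^(k-s))^m < (2^k)^m := by
    have hXcast : ((2^k - 2^(k-s) : ℕ) : ℝ) = (2:ℝ)^k * (((2:ℝ)^s - 1) / 2^s) := by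
      have hpow : (2:ℝ)^(k-s) * 2^s = 2^k := by
        rw [← pow_add, Nat.sub_add_cancel hsk]
      have h2 : (2:ℝ)^(k-s) = 2^k / 2^s := by
        rw [eq_div_iff (by positivity)]; exact hpow
      rw [Nat.cast_sub (Nat.pow_le_pow_right (by norm_num) (by omega))]
      push_cast
      rw [h2]
      field_simp
    rw [← Nat.cast_lt (α := ℝ)]
    push_cast [hXcast]
    calc (C:ℝ) * 2^s * ((2:ℝ)^k * (((2:ℝ)^s - 1) / 2^s))^m
        < (2:ℝ)^(d*s+2) * 2^s * ((2:ℝ)^k * (((2:ℝ)^s - 1) / 2^s))^m := by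
          apply mul_lt_mul_of_pos_right (mul_lt_mul_of_pos_right hCbound (by positivity))
          positivity
      _ = ((2:ℝ)^k)^m * ((((2:ℝ)^s - 1) / 2^s)^m * 2^N) := by
          rw [mul_pow, hN, pow_add, pow_add]
          ring
      _ ≤ ((2:ℝ)^k)^m * 1 := by
          apply mul_le_mul_of_nonneg_left hkey (by positivity)
      _ = ((2:ℝ)^k)^m := by ring
  obtain ⟨f, hf⟩ := ABQ2.exists_good k s m hsk (by rw [← hd]; exact_mod_cast hlt)
  refine ⟨Finset.univ.image f, ?_, ?_⟩
  · intro W hW x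
    obtain ⟨i, hi⟩ := hf W hW (Submodule.Quotient.mk x)
    exact ⟨f i, Finset.mem_image_of_mem f (Finset.mem_univ i),
      (Submodule.Quotient.eq W).mp hi⟩
  · have h1 : ((Finset.univ.image f).card : ℝ) ≤ m := by
      exact_mod_cast (Finset.card_image_le.trans (by simp))
    have h2 : (m:ℝ) ≤ (N:ℝ)/den + 1 := by
      exact (Nat.ceil_lt_add_one (by positivity)).le
    have h3 : ((s:ℝ) * ((k:ℝ) - (s:ℝ)) + (s:ℝ) + 2) = (N:ℝ) := by
      rw [hN, hd]
      push_cast [Nat.cast_sub hsk]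
      ring
    rw [h3]
    exact h1.trans h2
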